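/- For every Ω > 0 and m > 0, (Ω·2^{2Ω/m + 2})/(m·log₂ e) − 2^{4Ω/m} + 1 ≤ 0; consequently the function m ↦ (2/(m·log₂ e))·(2^{2Ω/m}+1)/(2^{2Ω/m}−1) is nonincreasing in m on (0,∞) for each fixed Ω > 0. -/

import Mathlib

open Real

private lemma sinh_convexOn : ConvexOn ℝ (Set.Ici (0:ℝ)) Real.sinh := by
  apply convexOn_of_deriv2_nonneg (convex_Ici 0)
    Real.continuous_sinh.continuousOn
    Real.differentiable_sinh.differentiableOn
  · rw [Real.deriv_sinh]
    exact Real.differentiable_cosh.differentiableOn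
  · intro x hx
    rw [interior_Ici] at hx
    simp only [Function.iterate_succ, Function.iterate_zero, Function.comp_apply, id_eq]
    rw [Real.deriv_sinh, Real.deriv_cosh]
    rw [← Real.sinh_zero]
    exact Real.sinh_le_sinh.mpr hx.le

private lemma sinh_slope {a b : ℝ} (ha : 0 ≤ a) (hab : a ≤ b) :
    b * Real.sinh a ≤ a * Real.sinh b := by
  rcases eq_or_lt_of_le (ha.trans hab) with hb | hb
  · have ha0 : a = 0 := le_antisymm (hab.trans hb.ge) ha
    simp [ha0, ← hb]
  · have hba : 0 < b := hb
    have h1 : 0 ≤ 1 - a / b := by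
      rw [sub_nonneg]
      exact div_le_one_of_le₀ hab hba.le
    have h2 : 0 ≤ a / b := div_nonneg ha hba.le
    have key := sinh_convexOn.2 (Set.self_mem_Ici) (Set.mem_Ici.mpr hba.le) h1 h2 (by ring)
    have hpt : (1 - a / b) • (0:ℝ) + (a / b) • b = a := by
      field_simp
      simp [hba.ne']
    rw [hpt] at key
    simp only [smul_eq_mul, Real.sinh_zero, mul_zero, zero_add] at key
    calc b * Real.sinh a ≤ b * (a / b * Real.sinh b) := by
          exact mul_le_mul_of_nonneg_left key hba.le
      _ = a * Real.sinh b := by field_simp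

private lemma exp_core {x y : ℝ} (hy : 0 < y) (hxy : y ≤ x) :
    y * (Real.exp y + 1) * (Real.exp x - 1) ≤ x * (Real.exp x + 1) * (Real.exp y - 1) := by
  have ha : 0 ≤ (x - y) / 2 := by linarith
  have hab : (x - y) / 2 ≤ (x + y) / 2 := by linarith
  have h := sinh_slope ha hab
  rw [Real.sinh_eq, Real.sinh_eq] at h
  have hG : 0 < Real.exp ((x + y) / 2) := Real.exp_pos _
  have e1 : Real.exp ((x - y) / 2) * Real.exp ((x + y) / 2) = Real.exp x := by
    rw [← Real.exp_add]; congr 1; ring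
  have e2 : Real.exp (-((x - y) / 2)) * Real.exp ((x + y) / 2) = Real.exp y := by
    rw [← Real.exp_add]; congr 1; ring
  have e3 : Real.exp (-((x + y) / 2)) * Real.exp ((x + y) / 2) = 1 := by
    rw [← Real.exp_add]; simp
  have e4 : Real.exp ((x + y) / 2) * Real.exp ((x + y) / 2) = Real.exp x * Real.exp y := by
    rw [← Real.exp_add, ← Real.exp_add]; congr 1; ring
  nlinarith [mul_le_mul_of_nonneg_right h hG.le, Real.exp_pos x, Real.exp_pos y]

private lemma key1 {x : ℝ} (hx : 0 ≤ x) :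
    2 * x * Real.exp x + 1 ≤ Real.exp x * Real.exp x := by
  have hs : x ≤ Real.sinh x := Real.self_le_sinh_iff.mpr hx
  rw [Real.sinh_eq] at hs
  have e3 : Real.exp (-x) * Real.exp x = 1 := by rw [← Real.exp_add]; simp
  nlinarith [mul_le_mul_of_nonneg_right hs (Real.exp_pos x).le, Real.exp_pos x]

theorem stmt_9 :
    (∀ Ω m : ℝ, 0 < Ω → 0 < m →
      Ω * (2 : ℝ) ^ (2 * Ω / m + 2) / (m * Real.logb 2 (Real.exp 1)) -
          (2 : ℝ) ^ (4 * Ω / m) + 1 ≤ 0) ∧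
    ∀ Ω : ℝ, 0 < Ω →
      AntitoneOn
        (fun m : ℝ =>
          2 / (m * Real.logb 2 (Real.exp 1)) *
            (((2 : ℝ) ^ (2 * Ω / m) + 1) / ((2 : ℝ) ^ (2 * Ω / m) - 1)))
        (Set.Ioi 0) := by
  have hlog2 : 0 < Real.log 2 := Real.log_pos one_lt_two
  have hlb : Real.logb 2 (Real.exp 1) = 1 / Real.log 2 := by
    rw [Real.logb, Real.log_exp]
  constructor
  · intro Ω m hΩ hm
    set x := 2 * Ω * Real.log 2 / m with hxdef
    have hx : 0 < x := by positivity
    have h1 : (2 : ℝ) ^ (2 * Ω / m + 2) = Real.exp x * 4 := by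
      rw [Real.rpow_def_of_pos two_pos,
        show Real.log 2 * (2 * Ω / m + 2) = x + (Real.log 2 + Real.log 2) by
          rw [hxdef]; ring,
        Real.exp_add, Real.exp_add, Real.exp_log two_pos]
      ring
    have h2 : (2 : ℝ) ^ (4 * Ω / m) = Real.exp x * Real.exp x := by
      rw [Real.rpow_def_of_pos two_pos,
        show Real.log 2 * (4 * Ω / m) = x + x by rw [hxdef]; ring, Real.exp_add]
    rw [h1, h2, hlb]
    have h3 : Ω * (Real.exp x * 4) / (m * (1 / Real.log 2)) = 2 * x * Real.exp x := by
      rw [hxdef]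
      field_simp
      ring
    rw [h3]
    linarith [key1 hx.le]
  · intro Ω hΩ a ha b hb hab
    simp only [Set.mem_Ioi] at ha hb
    set x := 2 * Ω * Real.log 2 / a with hxdef
    set y := 2 * Ω * Real.log 2 / b with hydef
    have hy : 0 < y := by positivity
    have hyx : y ≤ x := by
      apply div_le_div_of_nonneg_left (by positivity) ha hab
    have ea : (2 : ℝ) ^ (2 * Ω / a) = Real.exp x := by
      rw [Real.rpow_def_of_pos two_pos]
      congr 1
      rw [hxdef]; ring
    have eb : (2 : ℝ) ^ (2 * Ω / b) = Real.exp y := by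
      rw [Real.rpow_def_of_pos two_pos]
      congr 1
      rw [hydef]; ring
    have ca : 2 / (a * Real.logb 2 (Real.exp 1)) = x / Ω := by
      rw [hlb, hxdef]
      field_simp
    have cb : 2 / (b * Real.logb 2 (Real.exp 1)) = y / Ω := by
      rw [hlb, hydef]
      field_simp
    simp only [ea, eb, ca, cb]
    have hex : 1 < Real.exp x := by
      rw [← Real.exp_zero]
      exact Real.exp_lt_exp.mpr (lt_of_lt_of_le hy hyx)
    have hey : 1 < Real.exp y := by
      rw [← Real.exp_zero]
      exact Real.exp_lt_exp.mpr hy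
    rw [div_mul_div_comm, div_mul_div_comm,
      div_le_div_iff₀ (by nlinarith) (by nlinarith)]
    nlinarith [mul_le_mul_of_nonneg_left (exp_core hy hyx) hΩ.le]
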